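/- Let f_v(x) = ∑_{k=1}^K (w^k/‖w‖_2)·‖x^k - x_v^k‖_2 with w ∈ R_+^K, w ≠ 0, and suppose ‖x_v^k - x_t^k‖_2 > r for all k, with r > 0. Then the minimizer of f_v over the Euclidean ball {x : ‖x - x_t‖_2 ≤ r} is x_t + r·u where the k-th block of u is (w^k/‖w‖_2)·(x_v^k - x_t^k)/‖x_v^k - x_t^k‖_2, and moreover ‖u‖_2 = 1. -/

import Mathlib

open Finset

/-- for f_v(x) = ∑_k (w^k/‖w‖₂)·‖x^k - x_v^k‖₂ with all blocks of x_v at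
distance more than r from those of x_t, the point x_t + r·u, where block k of u is
(w^k/‖w‖₂)·(x_v^k - x_t^k)/‖x_v^k - x_t^k‖₂, minimizes f_v over the Euclidean ball of
radius r at x_t; moreover ‖u‖₂ = 1. -/
theorem stmt13 {K : ℕ} (n : Fin K → ℕ)
    (w : EuclideanSpace ℝ (Fin K)) (hw : ∀ k, 0 ≤ w k) (hw0 : w ≠ 0)
    (x_v x_t : PiLp 2 (fun k : Fin K => EuclideanSpace ℝ (Fin (n k))))
    (r : ℝ) (hr : 0 < r) (hfar : ∀ k, r < ‖x_v k - x_t k‖) :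
    ‖((WithLp.equiv 2 _).symm
        (fun k => ((w k / ‖w‖) * ‖x_v k - x_t k‖⁻¹) • (x_v k - x_t k)) :
        PiLp 2 (fun k : Fin K => EuclideanSpace ℝ (Fin (n k))))‖ = 1 ∧
    (x_t + r • (WithLp.equiv 2 _).symm
        (fun k => ((w k / ‖w‖) * ‖x_v k - x_t k‖⁻¹) • (x_v k - x_t k))
      ∈ Metric.closedBall x_t r) ∧
    (∀ x ∈ Metric.closedBall x_t r,
      ∑ k, (w k / ‖w‖) *
          ‖(x_t + r • (WithLp.equiv 2 _).symm
              (fun k => ((w k / ‖w‖) * ‖x_v k - x_t k‖⁻¹) • (x_v k - x_t k))) k - x_v k‖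
        ≤ ∑ k, (w k / ‖w‖) * ‖x k - x_v k‖) := by
  have hwpos : (0:ℝ) < ‖w‖ := norm_pos_iff.mpr hw0
  set c : Fin K → ℝ := fun k => w k / ‖w‖ with hc
  set d : (k : Fin K) → EuclideanSpace ℝ (Fin (n k)) := fun k => x_v k - x_t k with hd
  set u : PiLp 2 (fun k : Fin K => EuclideanSpace ℝ (Fin (n k))) :=
    (WithLp.equiv 2 _).symm (fun k => (c k * ‖d k‖⁻¹) • d k) with hu
  have hdk : ∀ k, (0:ℝ) < ‖d k‖ := fun k => hr.trans (hfar k)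
  have hck : ∀ k, 0 ≤ c k := fun k => div_nonneg (hw k) hwpos.le
  have hck1 : ∀ k, c k ≤ 1 := by
    intro k
    have h1 : w k ≤ ‖w‖ := by
      have hS : ‖w‖^2 = ∑ j, (w j)^2 := by
        rw [EuclideanSpace.norm_eq,
          Real.sq_sqrt (Finset.sum_nonneg fun j _ => sq_nonneg _)]
        congr 1; ext j; rw [Real.norm_eq_abs, sq_abs]
      have h2 : (w k)^2 ≤ ∑ j, (w j)^2 := by
        simpa using Finset.single_le_sum (f := fun j => (w j)^2)
          (fun j _ => sq_nonneg _) (Finset.mem_univ k)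
      nlinarith [hw k, norm_nonneg w]
    rw [hc]; exact div_le_one_of_le₀ h1 hwpos.le
  have huk : ∀ k, ‖u k‖ = c k := by
    intro k
    simp only [hu, WithLp.equiv_symm_apply, PiLp.toLp_apply, norm_smul, Real.norm_eq_abs,
      abs_mul, abs_of_nonneg (hck k), abs_of_nonneg (inv_nonneg.mpr (hdk k).le)]
    rw [mul_assoc, inv_mul_cancel₀ (hdk k).ne', mul_one]
  have hcsq : ∑ k, c k ^ 2 = 1 := by
    have := EuclideanSpace.norm_eq w
    have hsum : ∑ k, (w k)^2 = ‖w‖^2 := by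
      rw [this, Real.sq_sqrt (Finset.sum_nonneg fun k _ => sq_nonneg _)]
      congr 1; ext k; rw [Real.norm_eq_abs, sq_abs]
    simp only [hc, div_pow]
    rw [← Finset.sum_div, hsum]
    field_simp
  have hunorm : ‖u‖ = 1 := by
    have h := PiLp.norm_sq_eq_of_L2 _ u
    have : ‖u‖^2 = 1 := by
      rw [h]; simp_rw [huk]; exact hcsq
    nlinarith [norm_nonneg u]
  refine ⟨hunorm, ?_, ?_⟩
  · rw [Metric.mem_closedBall, dist_eq_norm, add_sub_cancel_left, norm_smul,
      Real.norm_eq_abs, abs_of_pos hr, hunorm, mul_one]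
  · intro x hx
    -- the candidate block norm
    have hblock : ∀ k, ‖(x_t + r • u) k - x_v k‖ = ‖d k‖ - r * c k := by
      intro k
      have h1 : (x_t + r • u) k - x_v k = (r * (c k * ‖d k‖⁻¹) - 1) • d k := by
        simp only [hu, PiLp.add_apply, PiLp.smul_apply, WithLp.equiv_symm_apply, PiLp.toLp_apply,
          smul_smul, sub_smul, one_smul, hd]
        abel
      rw [h1, norm_smul, Real.norm_eq_abs]
      have hle : r * c k ≤ r := by nlinarith [hck k, hck1 k]
      have hlt : r * (c k * ‖d k‖⁻¹) ≤ 1 := by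
        rw [← mul_assoc]
        calc r * c k * ‖d k‖⁻¹ ≤ r * ‖d k‖⁻¹ := by
              exact mul_le_mul_of_nonneg_right hle (inv_nonneg.mpr (hdk k).le)
          _ ≤ 1 := by
              rw [← div_eq_mul_inv, div_le_one (hdk k)]; exact (hfar k).le
      rw [abs_of_nonpos (by linarith), neg_sub, sub_mul, one_mul, mul_assoc,
        mul_assoc, inv_mul_cancel₀ (hdk k).ne', mul_one]
    have hLHS : ∑ k, c k * ‖(x_t + r • u) k - x_v k‖
        = ∑ k, c k * ‖d k‖ - r := by
      simp_rw [hblock, mul_sub]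
      rw [Finset.sum_sub_distrib]
      congr 1
      have : ∑ k, c k * (r * c k) = r * ∑ k, c k ^2 := by
        rw [Finset.mul_sum]; congr 1; ext k; ring
      rw [this, hcsq, mul_one]
    -- Cauchy-Schwarz bound
    have hCS : ∑ k, c k * ‖x k - x_t k‖ ≤ r := by
      have h1 : (∑ k, c k * ‖x k - x_t k‖)^2
          ≤ (∑ k, c k ^2) * ∑ k, ‖x k - x_t k‖^2 :=
        Finset.sum_mul_sq_le_sq_mul_sq _ _ _
      have h2 : ∑ k, ‖x k - x_t k‖^2 = ‖x - x_t‖^2 := by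
        rw [PiLp.norm_sq_eq_of_L2]; rfl
      have h3 : ‖x - x_t‖ ≤ r := by
        rwa [Metric.mem_closedBall, dist_eq_norm] at hx
      have h4 : 0 ≤ ∑ k, c k * ‖x k - x_t k‖ :=
        Finset.sum_nonneg fun k _ => mul_nonneg (hck k) (norm_nonneg _)
      nlinarith [norm_nonneg (x - x_t)]
    have htri : ∀ k, ‖d k‖ - ‖x k - x_t k‖ ≤ ‖x k - x_v k‖ := by
      intro k
      have h := norm_sub_le (x k - x_v k) (x k - x_t k)
      have heq : x k - x_v k - (x k - x_t k) = -(d k) := by simp only [hd, neg_sub, sub_sub_sub_cancel_left]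
      rw [heq, norm_neg] at h
      linarith
    calc ∑ k, c k * ‖(x_t + r • u) k - x_v k‖ = ∑ k, c k * ‖d k‖ - r := hLHS
      _ ≤ ∑ k, c k * ‖d k‖ - ∑ k, c k * ‖x k - x_t k‖ := by linarith
      _ = ∑ k, c k * (‖d k‖ - ‖x k - x_t k‖) := by
          rw [← Finset.sum_sub_distrib]; congr 1; ext k; ring
      _ ≤ ∑ k, c k * ‖x k - x_v k‖ :=
          Finset.sum_le_sum fun k _ => mul_le_mul_of_nonneg_left (htri k) (hck k)
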